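/- Let k ≥ 1 be an integer and d a non-negative integer, and let u = (u_1,…,u_n) and ũ = (ũ_1,…,ũ_n) be two (agent × item)-level adjacent profiles of monotone utility functions over the item set M = {1,…,m}. If an allocation A is EFd with respect to u^{−k}, then A is EF(d+2) with respect to ũ^{−(k−1)}. -/
import Mathlib


def IsPartition {n m : ℕ} (A : Fin n → Finset (Fin m)) : Prop :=
  (∀ i j : Fin n, i ≠ j → Disjoint (A i) (A j)) ∧
    Finset.univ.biUnion A = (Finset.univ : Finset (Fin m))

def EF {n m : ℕ} (c : ℕ) (u : Fin n → Finset (Fin m) → ℝ)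
    (A : Fin n → Finset (Fin m)) : Prop :=
  ∀ i i' : Fin n, ∃ S ⊆ A i', S.card ≤ c ∧ u i (A i) ≥ u i (A i' \ S)

noncomputable def kRemoved {m : ℕ} (u : Finset (Fin m) → ℝ) (k : ℕ)
    (S : Finset (Fin m)) : ℝ :=
  ((Finset.univ : Finset (Fin m)).powerset.filter fun T => T.card ≤ k).inf'
    ⟨∅, by simp⟩ fun T => u (S \ T)

def MonotoneProfile {n m : ℕ} (u : Fin n → Finset (Fin m) → ℝ) : Prop :=
  ∀ i : Fin n, (∀ S : Finset (Fin m), 0 ≤ u i S) ∧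
    ∀ S T : Finset (Fin m), S ⊆ T → u i S ≤ u i T

def ItemAdjFn {n m : ℕ} (u u' : Fin n → Finset (Fin m) → ℝ) : Prop :=
  ∃ (iStar : Fin n) (jStar : Fin m),
    (∀ i : Fin n, i ≠ iStar → u i = u' i) ∧
    ∀ S : Finset (Fin m), jStar ∉ S → u iStar S = u' iStar S

lemma kRemoved_le {m : ℕ} (u : Finset (Fin m) → ℝ) (k : ℕ) (S T : Finset (Fin m))
    (hT : T.card ≤ k) : kRemoved u k S ≤ u (S \ T) := by
  apply Finset.inf'_le
  simp [hT]

lemma le_kRemoved {m : ℕ} (u : Finset (Fin m) → ℝ) (k : ℕ) (S : Finset (Fin m)) (x : ℝ)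
    (h : ∀ T : Finset (Fin m), T.card ≤ k → x ≤ u (S \ T)) : x ≤ kRemoved u k S := by
  apply Finset.le_inf'
  intro T hT
  simp only [Finset.mem_filter, Finset.mem_powerset] at hT
  exact h T hT.2

lemma kRemoved_exists {m : ℕ} (u : Finset (Fin m) → ℝ) (k : ℕ) (S : Finset (Fin m)) :
    ∃ T : Finset (Fin m), T.card ≤ k ∧ kRemoved u k S = u (S \ T) := by
  obtain ⟨T, hT, h⟩ := Finset.exists_mem_eq_inf'
    (⟨∅, by simp⟩ : (((Finset.univ : Finset (Fin m)).powerset.filter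
      fun T => T.card ≤ k)).Nonempty) (fun T => u (S \ T))
  simp only [Finset.mem_filter, Finset.mem_powerset] at hT
  exact ⟨T, hT.2, h⟩

lemma kRemoved_mono {m : ℕ} (u : Finset (Fin m) → ℝ)
    (hmono : ∀ S T : Finset (Fin m), S ⊆ T → u S ≤ u T) (k : ℕ)
    {X Y : Finset (Fin m)} (hXY : X ⊆ Y) : kRemoved u k X ≤ kRemoved u k Y := by
  apply le_kRemoved
  intro T hT
  exact (kRemoved_le u k X T hT).trans
    (hmono _ _ (Finset.sdiff_subset_sdiff hXY (Finset.Subset.refl _)))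

theorem EF_stable_under_adjacency (n m : ℕ) (k : ℕ) (hk : 1 ≤ k) (d : ℕ)
    (u utilde : Fin n → Finset (Fin m) → ℝ)
    (hu : MonotoneProfile u) (hut : MonotoneProfile utilde)
    (hadj : ItemAdjFn u utilde)
    (A : Fin n → Finset (Fin m)) (hA : IsPartition A)
    (h : EF d (fun i => kRemoved (u i) k) A) :
    EF (d + 2) (fun i => kRemoved (utilde i) (k - 1)) A := by
  obtain ⟨iStar, jStar, hne, heq⟩ := hadj
  intro i i'
  obtain ⟨S, hS, hScard, hSineq⟩ := h i i'
  simp only at hSineq ⊢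
  have humono := (hu i).2
  have hagree : ∀ X : Finset (Fin m), jStar ∉ X → u i X = utilde i X := by
    intro X hX
    by_cases hi : i = iStar
    · subst hi; exact heq X hX
    · rw [hne i hi]
  have hKagree : ∀ (k' : ℕ) (X : Finset (Fin m)), jStar ∉ X →
      kRemoved (u i) k' X = kRemoved (utilde i) k' X := by
    intro k' X hX
    unfold kRemoved
    refine Finset.inf'_congr _ rfl fun T _ => hagree _ ?_
    simp only [Finset.mem_sdiff]
    tauto
  -- choose j₀ from a minimizer of kRemoved (u i) k (A i' \ S)
  obtain ⟨T, hTcard, hTeq⟩ := kRemoved_exists (u i) k (A i' \ S)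
  obtain ⟨j₀, hj₀⟩ : ∃ j₀ : Fin m,
      kRemoved (u i) (k-1) ((A i' \ S) \ {j₀}) ≤ kRemoved (u i) k (A i' \ S) := by
    rcases T.eq_empty_or_nonempty with hT | hT
    · refine ⟨jStar, ?_⟩
      calc kRemoved (u i) (k-1) ((A i' \ S) \ {jStar})
          ≤ u i (((A i' \ S) \ {jStar}) \ (∅ : Finset (Fin m))) := kRemoved_le _ _ _ _ (by simp)
        _ ≤ u i ((A i' \ S) \ T) := by
            apply humono
            subst hT
            simp only [Finset.sdiff_empty]
            exact Finset.sdiff_subset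
        _ = kRemoved (u i) k (A i' \ S) := hTeq.symm
    · obtain ⟨j₀, hj₀T⟩ := hT
      refine ⟨j₀, ?_⟩
      have hcard : (T \ {j₀}).card ≤ k - 1 := by
        have h2 := Finset.card_sdiff_of_subset (Finset.singleton_subset_iff.2 hj₀T)
        simp only [Finset.card_singleton] at h2
        omega
      have hseteq : ((A i' \ S) \ {j₀}) \ (T \ {j₀}) = (A i' \ S) \ T := by
        ext x
        simp only [Finset.mem_sdiff, Finset.mem_singleton]
        constructor
        · rintro ⟨⟨hx, hxj⟩, hxt⟩
          exact ⟨hx, fun hT' => hxt ⟨hT', hxj⟩⟩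
        · rintro ⟨hx, hxt⟩
          exact ⟨⟨hx, fun h' => hxt (h' ▸ hj₀T)⟩, fun h' => hxt h'.1⟩
      calc kRemoved (u i) (k-1) ((A i' \ S) \ {j₀})
          ≤ u i (((A i' \ S) \ {j₀}) \ (T \ {j₀})) := kRemoved_le _ _ _ _ hcard
        _ = u i ((A i' \ S) \ T) := by rw [hseteq]
        _ = kRemoved (u i) k (A i' \ S) := hTeq.symm
  refine ⟨(S ∪ {j₀, jStar}) ∩ A i', Finset.inter_subset_right, ?_, ?_⟩
  · calc ((S ∪ {j₀, jStar}) ∩ A i').card ≤ (S ∪ {j₀, jStar}).card :=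
          Finset.card_le_card Finset.inter_subset_left
      _ ≤ S.card + ({j₀, jStar} : Finset (Fin m)).card := Finset.card_union_le _ _
      _ ≤ d + 2 := by
          have := Finset.card_insert_le j₀ ({jStar} : Finset (Fin m))
          simp only [Finset.card_singleton] at this
          omega
  · have hset : A i' \ ((S ∪ {j₀, jStar}) ∩ A i') = ((A i' \ S) \ {j₀}) \ {jStar} := by
      ext x
      simp only [Finset.mem_sdiff, Finset.mem_inter, Finset.mem_union, Finset.mem_insert,
        Finset.mem_singleton]
      tauto
    calc kRemoved (utilde i) (k-1) (A i' \ ((S ∪ {j₀, jStar}) ∩ A i'))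
        = kRemoved (u i) (k-1) (((A i' \ S) \ {j₀}) \ {jStar}) := by
          rw [hset, ← hKagree]; simp
      _ ≤ kRemoved (u i) (k-1) ((A i' \ S) \ {j₀}) :=
          kRemoved_mono _ humono _ Finset.sdiff_subset
      _ ≤ kRemoved (u i) k (A i' \ S) := hj₀
      _ ≤ kRemoved (u i) k (A i) := hSineq
      _ ≤ kRemoved (u i) (k-1) (A i \ {jStar}) := by
          apply le_kRemoved
          intro T' hT'
          have hcard : (insert jStar T').card ≤ k := by
            have := Finset.card_insert_le jStar T'
            omega
          have hseteq : A i \ insert jStar T' = (A i \ {jStar}) \ T' := by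
            ext x
            simp only [Finset.mem_sdiff, Finset.mem_insert, Finset.mem_singleton]
            tauto
          calc kRemoved (u i) k (A i) ≤ u i (A i \ insert jStar T') :=
                kRemoved_le _ _ _ _ hcard
            _ = u i ((A i \ {jStar}) \ T') := by rw [hseteq]
      _ = kRemoved (utilde i) (k-1) (A i \ {jStar}) := hKagree _ _ (by simp)
      _ ≤ kRemoved (utilde i) (k-1) (A i) :=
          kRemoved_mono _ (hut i).2 _ Finset.sdiff_subset
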